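/- For a closed polygonal line p₀p₁…p_n = p₀ in ℝ³ (with all vertices distinct from their neighbors and no vertex angle equal to π), the sum of the exterior angles (π − ∠(p_{i−1}, p_i, p_{i+1})) over all vertices is at least 2π. -/

import Mathlib

section Aux

variable {V : Type*} [NormedAddCommGroup V] [InnerProductSpace ℝ V]

open InnerProductGeometry Real
open scoped RealInnerProductSpace

private lemma angle_triangle_unit {x y z : V} (hx : ‖x‖ = 1) (hy : ‖y‖ = 1) (hz : ‖z‖ = 1) :
    angle x z ≤ angle x y + angle y z := by
  by_cases hab : π ≤ angle x y + angle y z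
  · linarith [angle_le_pi x z]
  push_neg at hab
  set s : ℝ := ⟪x, y⟫ with hs
  set t : ℝ := ⟪y, z⟫ with ht
  have hyy : ⟪y, y⟫ = 1 := by
    rw [real_inner_self_eq_norm_mul_norm, hy]; ring
  have hxx : ⟪x, x⟫ = 1 := by
    rw [real_inner_self_eq_norm_mul_norm, hx]; ring
  have hzz : ⟪z, z⟫ = 1 := by
    rw [real_inner_self_eq_norm_mul_norm, hz]; ring
  have hcos_a : Real.cos (angle x y) = s := by
    rw [cos_angle, hx, hy]; simp [hs]
  have hcos_b : Real.cos (angle y z) = t := by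
    rw [cos_angle, hy, hz]; simp [ht]
  have hcos_c : Real.cos (angle x z) = ⟪x, z⟫ := by
    rw [cos_angle, hx, hz]; simp
  have hnsq_a : ‖x - s • y‖ ^ 2 = 1 - s * s := by
    rw [norm_sub_sq_real, real_inner_smul_right, norm_smul, hx, hy]
    rw [Real.norm_eq_abs]
    rw [show (|s| * 1) ^ 2 = s * s by rw [mul_one, sq_abs]; ring]
    rw [← hs]
    ring
  have hzy : ⟪z, y⟫ = t := (real_inner_comm z y).symm.trans ht.symm
  have hnsq_b : ‖z - t • y‖ ^ 2 = 1 - t * t := by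
    rw [norm_sub_sq_real, real_inner_smul_right, norm_smul, hz, hy]
    rw [Real.norm_eq_abs]
    rw [show (|t| * 1) ^ 2 = t * t by rw [mul_one, sq_abs]; ring]
    rw [hzy]
    ring
  have hsin_a : Real.sin (angle x y) = ‖x - s • y‖ := by
    have h := sin_angle_mul_norm_mul_norm x y
    rw [hx, hy, hxx, hyy, ← hs] at h
    norm_num at h
    rw [h, ← hnsq_a, Real.sqrt_sq (norm_nonneg _)]
  have hsin_b : Real.sin (angle y z) = ‖z - t • y‖ := by
    have h := sin_angle_mul_norm_mul_norm y z
    rw [hy, hz, hyy, hzz, ← ht] at h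
    norm_num at h
    rw [h, ← hnsq_b, Real.sqrt_sq (norm_nonneg _)]
  have hinner : ⟪x - s • y, z - t • y⟫ = ⟪x, z⟫ - s * t := by
    have e1 : ⟪x - s • y, z - t • y⟫ =
        ⟪x, z⟫ - t * ⟪x, y⟫ - (s * ⟪y, z⟫ - s * (t * ⟪y, y⟫)) := by
      simp only [inner_sub_left, inner_sub_right, real_inner_smul_left, real_inner_smul_right]
      ring
    rw [e1, ← hs, ← ht, hyy]
    ring
  have hCS : -(‖x - s • y‖ * ‖z - t • y‖) ≤ ⟪x - s • y, z - t • y⟫ :=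
    neg_le_of_abs_le (abs_real_inner_le_norm _ _)
  have hcoscos : Real.cos (angle x y + angle y z) ≤ Real.cos (angle x z) := by
    rw [Real.cos_add, hcos_a, hcos_b, hsin_a, hsin_b, hcos_c]
    nlinarith [hCS, hinner]
  have h1 : angle x z ∈ Set.Icc 0 π := ⟨angle_nonneg x z, angle_le_pi x z⟩
  have h2 : angle x y + angle y z ∈ Set.Icc 0 π :=
    ⟨add_nonneg (angle_nonneg x y) (angle_nonneg y z), le_of_lt hab⟩
  exact (Real.strictAntiOn_cos.le_iff_ge h2 h1).mp hcoscos

/-- Triangle inequality for angles between vectors. -/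
private lemma angle_triangle_ineq (x y z : V) : angle x z ≤ angle x y + angle y z := by
  rcases eq_or_ne x 0 with rfl | hx
  · rw [angle_zero_left, angle_zero_left]
    linarith [angle_nonneg y z]
  rcases eq_or_ne z 0 with rfl | hz
  · rw [angle_zero_right, angle_zero_right]
    linarith [angle_nonneg x y]
  rcases eq_or_ne y 0 with rfl | hy
  · rw [angle_zero_right, angle_zero_left]
    linarith [angle_le_pi x z]
  have hx' : (0:ℝ) < ‖x‖⁻¹ := inv_pos.mpr (norm_pos_iff.mpr hx)
  have hy' : (0:ℝ) < ‖y‖⁻¹ := inv_pos.mpr (norm_pos_iff.mpr hy)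
  have hz' : (0:ℝ) < ‖z‖⁻¹ := inv_pos.mpr (norm_pos_iff.mpr hz)
  have key := angle_triangle_unit (x := ‖x‖⁻¹ • x) (y := ‖y‖⁻¹ • y) (z := ‖z‖⁻¹ • z)
    (norm_smul_inv_norm hx) (norm_smul_inv_norm hy) (norm_smul_inv_norm hz)
  rwa [angle_smul_left_of_pos _ _ hx', angle_smul_left_of_pos _ _ hx',
    angle_smul_right_of_pos _ _ hz', angle_smul_right_of_pos _ _ hy',
    angle_smul_left_of_pos _ _ hy', angle_smul_right_of_pos _ _ hz'] at key

/-- Splitting an angle along the sum of the vectors. -/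
private lemma angle_add_split {u v : V} (hu : u ≠ 0) (hv : v ≠ 0) :
    angle u (u + v) + angle (u + v) v = angle u v := by
  have h := EuclideanGeometry.angle_add_angle_add_angle_eq_pi
    (V := V) (P := V) (p₁ := u) (p₂ := (0:V)) (u + v)
    (Ne.symm hu)
  unfold EuclideanGeometry.angle at h
  simp only [vsub_eq_sub, zero_sub, sub_zero, add_sub_cancel_left, sub_add_cancel_left] at h
  rw [angle_neg_neg, angle_neg_right, angle_comm v u] at h
  linarith

/-- Fenchel's theorem in vector form: nonzero vectors summing to zero have total
turning at least `2π`. -/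
private lemma fenchel_vec : ∀ n : ℕ, 2 ≤ n → ∀ v : ℕ → V, (∀ i, i < n → v i ≠ 0) →
    v n = v 0 → ∑ i ∈ Finset.range n, v i = 0 →
    2 * π ≤ ∑ i ∈ Finset.range n, angle (v i) (v (i + 1)) := by
  intro n
  induction n using Nat.strong_induction_on with
  | _ n ih =>
    intro hn v hne hvn hsum
    obtain ⟨m, rfl⟩ : ∃ m, n = m + 2 := ⟨n - 2, by omega⟩
    rcases Nat.eq_zero_or_pos m with rfl | hm
    · -- base case n = 2
      simp only [Finset.sum_range_succ, Finset.sum_range_zero, zero_add] at hsum ⊢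
      have h1 : v 1 = -v 0 := eq_neg_of_add_eq_zero_right hsum
      rw [hvn, h1, angle_self_neg_of_nonzero (hne 0 (by omega)),
        angle_neg_self_of_nonzero (hne 0 (by omega))]
      linarith
    · -- inductive step, n = k + 3
      obtain ⟨k, rfl⟩ : ∃ k, m = k + 1 := ⟨m - 1, by omega⟩
      have hvk3 : v (k + 3) = v 0 := hvn
      have hbig : ∑ i ∈ Finset.range (k + 1 + 2), angle (v i) (v (i + 1)) =
          (∑ i ∈ Finset.range k, angle (v i) (v (i + 1)))
            + angle (v k) (v (k + 1)) + angle (v (k + 1)) (v (k + 2))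
            + angle (v (k + 2)) (v (k + 3)) := by
        rw [Finset.sum_range_succ, Finset.sum_range_succ, Finset.sum_range_succ]
      have hbigsum : ∑ i ∈ Finset.range (k + 1 + 2), v i =
          (∑ i ∈ Finset.range k, v i) + v k + v (k + 1) + v (k + 2) := by
        rw [Finset.sum_range_succ, Finset.sum_range_succ, Finset.sum_range_succ]
      by_cases hsz : v (k + 1) + v (k + 2) = 0
      · -- the last two edges cancel; drop both
        rcases Nat.eq_zero_or_pos k with rfl | hk
        · -- n = 3 : would force v 0 = 0
          exfalso
          apply hne 0 (by omega)
          rw [hbigsum, Finset.sum_range_zero, zero_add, add_assoc, hsz, add_zero] at hsum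
          exact hsum
        obtain ⟨j, rfl⟩ : ∃ j, k = j + 1 := ⟨k - 1, by omega⟩
        have hneg : v (j + 3) = -(v (j + 2)) := eq_neg_of_add_eq_zero_right hsz
        set w : ℕ → V := fun i => if i < j + 2 then v i else v 0 with hw
        have hwlt : ∀ i, i < j + 2 → w i = v i := by
          intro i hi; simp only [hw]; rw [if_pos hi]
        have hwtop : w (j + 2) = v 0 := by simp [hw]
        have ihw := ih (j + 2) (by omega) (by omega) w
          (fun i hi => by rw [hwlt i hi]; exact hne i (by omega))
          (by rw [hwtop, hwlt 0 (by omega)])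
          (by
            rw [Finset.sum_congr rfl (fun i hi => hwlt i (Finset.mem_range.mp hi))]
            rw [hbigsum] at hsum
            rw [Finset.sum_range_succ]
            have h5 : (∑ i ∈ Finset.range (j + 1), v i) + v (j + 1) +
                (v (j + 2) + v (j + 3)) = 0 := by rw [← add_assoc]; exact hsum
            rw [hsz, add_zero] at h5
            exact h5)
        have hsc : ∑ i ∈ Finset.range (j + 1), angle (w i) (w (i + 1)) =
            ∑ i ∈ Finset.range (j + 1), angle (v i) (v (i + 1)) :=
          Finset.sum_congr rfl (fun i hi => by
            have hi' := Finset.mem_range.mp hi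
            rw [hwlt i (by omega), hwlt (i + 1) (by omega)])
        have hsum_w : ∑ i ∈ Finset.range (j + 2), angle (w i) (w (i + 1)) =
            (∑ i ∈ Finset.range (j + 1), angle (v i) (v (i + 1)))
              + angle (v (j + 1)) (v 0) := by
          rw [Finset.sum_range_succ, hwtop, hwlt (j + 1) (by omega), hsc]
        rw [hsum_w] at ihw
        rw [hbig, hvk3]
        have hA : angle (v (j + 1)) (v 0) ≤
            angle (v (j + 1)) (v (j + 2)) + angle (v (j + 2)) (v 0) :=
          angle_triangle_ineq _ _ _
        have hpi1 : angle (v (j + 2)) (v (j + 3)) = π := by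
          rw [hneg]; exact angle_self_neg_of_nonzero (hne _ (by omega))
        have hpi2 : angle (v (j + 3)) (v 0) = π - angle (v (j + 2)) (v 0) := by
          rw [hneg]; exact angle_neg_left _ _
        have hle : angle (v (j + 2)) (v 0) ≤ π := angle_le_pi _ _
        rw [hpi1, hpi2]
        linarith
      · -- combine the last two edges into one
        set s := v (k + 1) + v (k + 2) with hs
        set w : ℕ → V := fun i => if i < k + 1 then v i else if i = k + 1 then s else v 0
          with hw
        have hwlt : ∀ i, i < k + 1 → w i = v i := by
          intro i hi; simp only [hw]; rw [if_pos hi]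
        have hwmid : w (k + 1) = s := by simp [hw]
        have hwtop : w (k + 2) = v 0 := by
          simp only [hw]
          rw [if_neg (by omega), if_neg (by omega)]
        have ihw := ih (k + 2) (by omega) (by omega) w
          (fun i hi => by
            rcases Nat.lt_or_ge i (k + 1) with h | h
            · rw [hwlt i h]; exact hne i (by omega)
            · have : i = k + 1 := by omega
              rw [this, hwmid]; exact hsz)
          (by rw [hwtop, hwlt 0 (by omega)])
          (by
            rw [Finset.sum_range_succ,
              Finset.sum_congr rfl (fun i hi => hwlt i (Finset.mem_range.mp hi)), hwmid]
            rw [hbigsum] at hsum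
            rw [Finset.sum_range_succ, hs, ← add_assoc]
            exact hsum)
        have hsc : ∑ i ∈ Finset.range k, angle (w i) (w (i + 1)) =
            ∑ i ∈ Finset.range k, angle (v i) (v (i + 1)) :=
          Finset.sum_congr rfl (fun i hi => by
            have hi' := Finset.mem_range.mp hi
            rw [hwlt i (by omega), hwlt (i + 1) (by omega)])
        have hsum_w : ∑ i ∈ Finset.range (k + 2), angle (w i) (w (i + 1)) =
            (∑ i ∈ Finset.range k, angle (v i) (v (i + 1)))
              + angle (v k) s + angle s (v 0) := by
          rw [Finset.sum_range_succ, Finset.sum_range_succ, hwmid, hwtop,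
            hwlt k (by omega), hsc]
        rw [hsum_w] at ihw
        rw [hbig, hvk3]
        have hB : angle (v (k + 1)) s + angle s (v (k + 2)) =
            angle (v (k + 1)) (v (k + 2)) :=
          angle_add_split (hne _ (by omega)) (hne _ (by omega))
        have hA1 : angle (v k) s ≤ angle (v k) (v (k + 1)) + angle (v (k + 1)) s :=
          angle_triangle_ineq _ _ _
        have hA2 : angle s (v 0) ≤ angle s (v (k + 2)) + angle (v (k + 2)) (v 0) :=
          angle_triangle_ineq _ _ _
        linarith

end Aux

/-- Polygonal Fenchel theorem: for a closed polygonal line `p₀ p₁ … pₙ = p₀` in `ℝ³`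
(consecutive vertices distinct and no vertex turning exactly backwards), the sum of the
exterior angles `π - ∠(pᵢ₋₁, pᵢ, pᵢ₊₁)` over all vertices is at least `2π`. -/
theorem closed_polygon_total_curvature_ge_two_pi
    (n : ℕ) (hn : 1 ≤ n)
    (p : ℕ → EuclideanSpace ℝ (Fin 3))
    (hper : ∀ i, p (i + n) = p i)
    (hne : ∀ i, p (i + 1) ≠ p i)
    (hnoCusp : ∀ i,
      InnerProductGeometry.angle (p (i + 1) - p i) (p (i + 2) - p (i + 1)) ≠ Real.pi) :
    2 * Real.pi ≤ ∑ i ∈ Finset.range n,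
      (Real.pi - EuclideanGeometry.angle (p i) (p (i + 1)) (p (i + 2))) := by
  rcases Nat.lt_or_ge n 2 with h2 | h2
  · -- n = 1 is contradictory
    exact absurd (by have := hper 0; simpa [show n = 1 by omega] using this) (hne 0)
  set v : ℕ → EuclideanSpace ℝ (Fin 3) := fun i => p (i + 1) - p i with hv
  have hrw : ∀ i, Real.pi - EuclideanGeometry.angle (p i) (p (i + 1)) (p (i + 2)) =
      InnerProductGeometry.angle (v i) (v (i + 1)) := by
    intro i
    have : EuclideanGeometry.angle (p i) (p (i + 1)) (p (i + 2)) =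
        InnerProductGeometry.angle (-(v i)) (v (i + 1)) := by
      unfold EuclideanGeometry.angle
      congr 1 <;> simp [hv] <;> abel
    rw [this, InnerProductGeometry.angle_neg_left]
    ring
  rw [Finset.sum_congr rfl (fun i _ => hrw i)]
  apply fenchel_vec n h2 v
  · intro i _
    exact sub_ne_zero_of_ne (hne i)
  · have h1 : p (n + 1) = p 1 := by have := hper 1; rwa [show 1 + n = n + 1 by omega] at this
    have h0 : p n = p 0 := by have := hper 0; rwa [zero_add] at this
    simp only [hv]
    rw [h1, h0]
  · rw [Finset.sum_range_sub (fun i => p i)]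
    have h0 : p n = p 0 := by simpa using hper 0
    rw [h0, sub_self]
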